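/- Let G be a finite group and S ⊆ G a subset that is inverse-closed, does not contain the identity, and is closed under conjugation. Then every eigenvalue of the adjacency matrix of the Cayley graph Γ(G,S), viewed as a matrix over ℂ, is of the form η_χ = (∑_{s ∈ S} χ(s)) / χ(1) for some irreducible finite-dimensional complex representation of G with character χ. -/

import Mathlib

open CategoryTheory

namespace Stmt1Aux

open Matrix

variable {G : Type} [Group G] [Fintype G] [DecidableEq G]

/-- The right regular representation of `G` on `G → ℂ`. -/
noncomputable def rreg : Representation ℂ G (G → ℂ) where
  toFun g :=
    { toFun := fun v x => v (x * g)
      map_add' := fun _ _ => rfl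
      map_smul' := fun _ _ => rfl }
  map_one' := LinearMap.ext fun v => funext fun x => by simp
  map_mul' g h := LinearMap.ext fun v => funext fun x => by simp [mul_assoc]

@[simp] lemma rreg_apply (g : G) (v : G → ℂ) (x : G) : rreg g v x = v (x * g) := rfl

/-- Restriction of a representation to an invariant subspace. -/
noncomputable def subRep {V : Type} [AddCommGroup V] [Module ℂ V] (ρ : Representation ℂ G V)
    (p : Submodule ℂ V) (hp : ∀ g, ∀ v ∈ p, ρ g v ∈ p) : Representation ℂ G ↥p where
  toFun g := (ρ g).restrict (fun v hv => hp g v hv)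
  map_one' := LinearMap.ext fun w => Subtype.ext <| by simp [LinearMap.restrict_apply]
  map_mul' g h := LinearMap.ext fun w => Subtype.ext <| by simp [LinearMap.restrict_apply]

@[simp] lemma subRep_apply {V : Type} [AddCommGroup V] [Module ℂ V] (ρ : Representation ℂ G V)
    (p : Submodule ℂ V) (hp : ∀ g, ∀ v ∈ p, ρ g v ∈ p) (g : G) (w : ↥p) :
    (subRep ρ p hp g w : V) = ρ g (w : V) := rfl

/-- The "eigenspace" for the Cayley sum operator. -/
noncomputable def eigSp (S : Finset G) (μ : ℂ) : Submodule ℂ (G → ℂ) where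
  carrier := {v | ∀ x : G, ∑ s ∈ S, v (s * x) = μ * v x}
  add_mem' := by
    intro a b ha hb x
    simp only [Pi.add_apply, Finset.sum_add_distrib, ha x, hb x]
    ring
  zero_mem' := by intro x; simp
  smul_mem' := by
    intro c a ha x
    simp only [Pi.smul_apply, smul_eq_mul, ← Finset.mul_sum, ha x]
    ring

lemma mem_eigSp {S : Finset G} {μ : ℂ} {v : G → ℂ} :
    v ∈ eigSp S μ ↔ ∀ x : G, ∑ s ∈ S, v (s * x) = μ * v x := Iff.rfl

lemma eigSp_invariant (S : Finset G) (μ : ℂ) (g : G) (v : G → ℂ) (hv : v ∈ eigSp S μ) :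
    rreg g v ∈ eigSp S μ := by
  intro x
  simp only [rreg_apply, mul_assoc]
  exact hv (x * g)

lemma spectrum_exists_eigenvector (A : Matrix G G ℂ) (μ : ℂ) (h : μ ∈ spectrum ℂ A) :
    ∃ v : G → ℂ, v ≠ 0 ∧ A *ᵥ v = μ • v := by
  rw [spectrum.mem_iff] at h
  have hdet : (algebraMap ℂ (Matrix G G ℂ) μ - A).det = 0 := by
    by_contra hd
    exact h ((Matrix.isUnit_iff_isUnit_det _).mpr (isUnit_iff_ne_zero.mpr hd))
  obtain ⟨v, hv0, hv⟩ := (Matrix.exists_mulVec_eq_zero_iff).mpr hdet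
  refine ⟨v, hv0, ?_⟩
  have h1 : (algebraMap ℂ (Matrix G G ℂ) μ) *ᵥ v - A *ᵥ v = 0 := by
    rw [← Matrix.sub_mulVec]; exact hv
  have h2 : (algebraMap ℂ (Matrix G G ℂ) μ) *ᵥ v = μ • v := by
    have : (algebraMap ℂ (Matrix G G ℂ) μ) = μ • (1 : Matrix G G ℂ) := by
      rw [Algebra.algebraMap_eq_smul_one]
    rw [this, Matrix.smul_mulVec, Matrix.one_mulVec]
  rw [h2, sub_eq_zero] at h1
  exact h1.symm

lemma eigen_mem_eigSp (S : Finset G) (Γ : SimpleGraph G) [DecidableRel Γ.Adj]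
    (hΓ : ∀ u v : G, Γ.Adj u v ↔ v * u⁻¹ ∈ S) (μ : ℂ) (v : G → ℂ)
    (hv : Γ.adjMatrix ℂ *ᵥ v = μ • v) : v ∈ eigSp S μ := by
  intro x
  have h1 := congrFun hv x
  rw [SimpleGraph.adjMatrix_mulVec_apply, Pi.smul_apply, smul_eq_mul] at h1
  rw [← h1]
  refine Finset.sum_nbij' (fun s => s * x) (fun y => y * x⁻¹) ?_ ?_ ?_ ?_ ?_
  · intro s hs
    rw [SimpleGraph.mem_neighborFinset, hΓ]
    simpa using hs
  · intro y hy
    rw [SimpleGraph.mem_neighborFinset, hΓ] at hy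
    simpa using hy
  · intro s _; group
  · intro y _; group
  · intro s _; rfl

lemma conj_sum_swap (S : Finset G) (hconj : ∀ s ∈ S, ∀ g : G, g⁻¹ * s * g ∈ S)
    (v : G → ℂ) (x : G) : ∑ s ∈ S, v (x * s) = ∑ s ∈ S, v (s * x) := by
  refine Finset.sum_nbij' (fun s => x * s * x⁻¹) (fun t => x⁻¹ * t * x) ?_ ?_ ?_ ?_ ?_
  · intro s hs
    have := hconj s hs x⁻¹
    simpa using this
  · intro t ht
    exact hconj t ht x
  · intro s _; group
  · intro t _; group
  · intro s _; exact congrArg v (by group)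

end Stmt1Aux

open Stmt1Aux Matrix

theorem stmt_1 {G : Type} [Group G] [Fintype G] [DecidableEq G]
    (S : Finset G)
    (hinv : ∀ s ∈ S, s⁻¹ ∈ S)
    (hid : (1 : G) ∉ S)
    (hconj : ∀ s ∈ S, ∀ g : G, g⁻¹ * s * g ∈ S)
    (Γ : SimpleGraph G) [DecidableRel Γ.Adj]
    (hΓ : ∀ u v : G, Γ.Adj u v ↔ v * u⁻¹ ∈ S) :
    ∀ μ ∈ spectrum ℂ (Γ.adjMatrix ℂ),
      ∃ V : FDRep ℂ G, Simple V ∧ μ = (∑ s ∈ S, V.character s) / V.character 1 := by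
  intro μ hμ
  obtain ⟨v₀, hv₀ne, hv₀⟩ := spectrum_exists_eigenvector (Γ.adjMatrix ℂ) μ hμ
  have hv₀E : v₀ ∈ eigSp S μ := eigen_mem_eigSp S Γ hΓ μ v₀ hv₀
  -- the set of nonzero invariant subspaces of the eigenspace
  set 𝒮 : Set (Submodule ℂ (G → ℂ)) :=
    {U | U ≠ ⊥ ∧ U ≤ eigSp S μ ∧ ∀ g, ∀ w ∈ U, rreg g w ∈ U} with h𝒮
  have hE𝒮 : eigSp S μ ∈ 𝒮 := by
    refine ⟨?_, le_rfl, fun g w hw => eigSp_invariant S μ g w hw⟩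
    intro hbot
    exact hv₀ne (by simpa [hbot] using hv₀E)
  obtain ⟨W, hW𝒮, hWmin⟩ :=
    (IsWellFounded.wf : WellFounded ((· < ·) : Submodule ℂ (G → ℂ) → _ → Prop)).has_min 𝒮 ⟨_, hE𝒮⟩
  obtain ⟨hWne, hWE, hWinv⟩ := hW𝒮
  -- minimality in usable form
  have hmin : ∀ U : Submodule ℂ (G → ℂ), U ≠ ⊥ → U ≤ W →
      (∀ g, ∀ w ∈ U, rreg g w ∈ U) → U = W := by
    intro U hUne hUW hUinv
    rcases eq_or_lt_of_le hUW with h | h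
    · exact h
    · exact absurd h (hWmin U ⟨hUne, hUW.trans hWE, hUinv⟩)
  set ρW : Representation ℂ G ↥W := subRep rreg W hWinv with hρW
  refine ⟨FDRep.of ρW, ?_, ?_⟩
  · -- Simple
    constructor
    intro Y f hmono
    constructor
    · -- IsIso f → f ≠ 0
      intro hiso hf0
      obtain ⟨fi, hfi1, hfi2⟩ := hiso.1
      rw [hf0, Limits.comp_zero] at hfi2
      have hid1 : (𝟙 (FDRep.of ρW) : _ ⟶ _) = 0 := hfi2.symm
      obtain ⟨w, hwW, hwne⟩ := (Submodule.ne_bot_iff W).mp hWne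
      have h1 : ((𝟙 (FDRep.of ρW) : _ ⟶ _).hom (⟨w, hwW⟩ : ↥W)) = ⟨w, hwW⟩ := rfl
      rw [hid1] at h1
      have h2 : ((0 : FDRep.of ρW ⟶ FDRep.of ρW).hom (⟨w, hwW⟩ : ↥W)) = 0 := rfl
      rw [h2] at h1
      exact hwne (by simpa using congrArg Subtype.val h1.symm)
    · -- f ≠ 0 → IsIso f
      intro hfne
      have hcomm : ∀ (g : G) (y : Y), f.hom.hom.hom (Y.ρ g y) = ρW g (f.hom.hom.hom y) := by
        intro g y
        have h := congrArg (fun (t : Y.V ⟶ (FDRep.of ρW).V) => t y) (f.comm g)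
        exact h
      -- the image of f, viewed inside G → ℂ
      set R : Submodule ℂ (G → ℂ) := (LinearMap.range f.hom.hom.hom).map W.subtype with hR
      have hRW : R ≤ W := Submodule.map_subtype_le W _
      have hRinv : ∀ g, ∀ u ∈ R, rreg g u ∈ R := by
        rintro g u hu
        obtain ⟨w, ⟨y, rfl⟩, rfl⟩ := hu
        refine ⟨f.hom.hom.hom (Y.ρ g y), ⟨Y.ρ g y, rfl⟩, ?_⟩
        rw [hcomm g y]
        rfl
      by_cases hR0 : R = ⊥
      · -- then f = 0, contradiction
        exfalso
        apply hfne
        have : f.hom.hom.hom = 0 := by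
          apply LinearMap.ext
          intro y
          have hmem : W.subtype (f.hom.hom.hom y) ∈ R := ⟨f.hom.hom.hom y, ⟨y, rfl⟩, rfl⟩
          rw [hR0, Submodule.mem_bot] at hmem
          exact Subtype.ext (by simpa using hmem)
        apply Action.Hom.ext
        exact ObjectProperty.hom_ext _ (ModuleCat.hom_ext this)
      · -- f is surjective
        have hReqW : R = W := hmin R hR0 hRW hRinv
        have hsurj : Function.Surjective f.hom.hom.hom := by
          intro w0
          have hw : W.subtype w0 ∈ R := by
            rw [hReqW]
            exact Submodule.coe_mem w0
          obtain ⟨w', ⟨y, rfl⟩, hval⟩ := hw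
          exact ⟨y, Subtype.ext hval⟩
        -- f is injective
        have hKinv : ∀ g, ∀ y ∈ LinearMap.ker f.hom.hom.hom, Y.ρ g y ∈ LinearMap.ker f.hom.hom.hom := by
          intro g y hy
          rw [LinearMap.mem_ker] at hy ⊢
          have h := hcomm g y
          rw [hy, map_zero] at h
          exact h
        set Z : FDRep ℂ G := FDRep.of (subRep Y.ρ (LinearMap.ker f.hom.hom.hom) hKinv) with hZ
        set g₀ : Z ⟶ Y :=
          { hom := ObjectProperty.homMk (ModuleCat.ofHom (LinearMap.ker f.hom.hom.hom).subtype)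
            comm := fun g => rfl } with hg₀
        have hg₀f : g₀ ≫ f = (0 : Z ⟶ Y) ≫ f := by
          apply Action.Hom.ext; apply ObjectProperty.hom_ext; apply ModuleCat.hom_ext; apply LinearMap.ext; intro z
          show f.hom.hom.hom ((LinearMap.ker f.hom.hom.hom).subtype z) = f.hom.hom.hom ((0 : Z ⟶ Y).hom z)
          have h0 : ((0 : Z ⟶ Y).hom z) = 0 := rfl
          rw [h0, map_zero]
          exact z.2
        have hg₀0 : g₀ = 0 := (cancel_mono f).mp hg₀f
        have hinj : Function.Injective f.hom.hom.hom := by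
          rw [← LinearMap.ker_eq_bot]
          rw [Submodule.eq_bot_iff]
          intro y hy
          have : (LinearMap.ker f.hom.hom.hom).subtype ⟨y, hy⟩ = (0 : Z ⟶ Y).hom ⟨y, hy⟩ := by
            rw [← hg₀0]; rfl
          rw [show ((0 : Z ⟶ Y).hom ⟨y, hy⟩ : Y.V) = 0 from rfl] at this
          simpa using this
        -- build the inverse
        set e : Y.V ≃ₗ[ℂ] ↥W := LinearEquiv.ofBijective f.hom.hom.hom ⟨hinj, hsurj⟩ with he
        refine ⟨⟨{ hom := ObjectProperty.homMk (ModuleCat.ofHom e.symm.toLinearMap)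
                   comm := fun g => ?_ }, ?_, ?_⟩⟩
        · apply ObjectProperty.hom_ext; apply ModuleCat.hom_ext; apply LinearMap.ext
          intro w
          apply e.injective
          show e (e.symm (ρW g w)) = e (Y.ρ g (e.symm w))
          calc e (e.symm (ρW g w)) = ρW g w := e.apply_symm_apply _
            _ = ρW g (e (e.symm w)) := by rw [e.apply_symm_apply]
            _ = ρW g (f.hom.hom.hom (e.symm w)) := rfl
            _ = f.hom.hom.hom (Y.ρ g (e.symm w)) := (hcomm g (e.symm w)).symm
            _ = e (Y.ρ g (e.symm w)) := rfl
        · ext y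
          show e.symm (f.hom.hom.hom y) = y
          exact e.symm_apply_apply y
        · apply Action.Hom.ext; apply ObjectProperty.hom_ext; apply ModuleCat.hom_ext; apply LinearMap.ext; intro w
          show f.hom.hom.hom (e.symm w) = w
          exact e.apply_symm_apply w
  · -- the eigenvalue formula
    have hfin : (0 : ℕ) < Module.finrank ℂ ↥W := by
      haveI : Nontrivial ↥W := Submodule.nontrivial_iff_ne_bot.mpr hWne
      exact Module.finrank_pos
    have hend : (∑ s ∈ S, ρW s) = (μ • LinearMap.id : ↥W →ₗ[ℂ] ↥W) := by
      apply LinearMap.ext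
      intro w
      apply Subtype.ext
      have hcoe : ((∑ s ∈ S, ρW s) w : G → ℂ) = ∑ s ∈ S, rreg s (w : G → ℂ) := by
        rw [LinearMap.sum_apply]
        push_cast [Submodule.coe_sum]
        rfl
      rw [hcoe]
      funext x
      have hwE : (w : G → ℂ) ∈ eigSp S μ := hWE w.2
      calc (∑ s ∈ S, rreg s (w : G → ℂ)) x = ∑ s ∈ S, (w : G → ℂ) (x * s) := by
            simp [Finset.sum_apply]
        _ = ∑ s ∈ S, (w : G → ℂ) (s * x) := conj_sum_swap S hconj _ x
        _ = μ * (w : G → ℂ) x := hwE x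
        _ = ((μ • LinearMap.id : ↥W →ₗ[ℂ] ↥W) w : G → ℂ) x := by
            simp
    have hχ1 : (FDRep.of ρW).character 1 = (Module.finrank ℂ ↥W : ℂ) := by
      rw [FDRep.char_one]
    have hχsum : ∑ s ∈ S, (FDRep.of ρW).character s = μ * (Module.finrank ℂ ↥W : ℂ) := by
      have h1 : ∑ s ∈ S, (FDRep.of ρW).character s
          = LinearMap.trace ℂ ↥W (∑ s ∈ S, ρW s) := by
        rw [map_sum]
        rfl
      rw [h1, hend, _root_.map_smul, LinearMap.trace_id, smul_eq_mul]
    rw [hχ1, hχsum]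
    have hne : (Module.finrank ℂ ↥W : ℂ) ≠ 0 := by
      exact_mod_cast hfin.ne'
    field_simp
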